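/- Let α > 1 be real and p a positive integer. For fixed s > 0, the function δ(t) = ((s+p)^α + t^α)^(1/α) − (s^α + t^α)^(1/α) is positive and strictly decreasing in t on (0,∞). -/

import Mathlib

private lemma aux_hasDerivAt (α : ℝ) (hα : 1 < α) {C t : ℝ} (hC : 0 < C) (ht : 0 < t) :
    HasDerivAt (fun t : ℝ => (C + t ^ α) ^ (1 / α))
      (t ^ (α - 1) * (C + t ^ α) ^ (1 / α - 1)) t := by
  have hα0 : (0:ℝ) < α := by linarith
  have h1 : HasDerivAt (fun t : ℝ => C + t ^ α) (α * t ^ (α - 1)) t :=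
    (Real.hasDerivAt_rpow_const (Or.inl ht.ne')).const_add C
  have hpos : 0 < C + t ^ α := by positivity
  have h2 : HasDerivAt (fun x : ℝ => x ^ (1 / α))
      (1 / α * (C + t ^ α) ^ (1 / α - 1)) (C + t ^ α) :=
    Real.hasDerivAt_rpow_const (Or.inl hpos.ne')
  have h3 := h2.comp t h1
  refine h3.congr_deriv ?_
  field_simp

theorem stmt_4 (α : ℝ) (hα : 1 < α) (p : ℕ) (hp : 0 < p) (s : ℝ) (hs : 0 < s) :
    (∀ t : ℝ, 0 < t →
        0 < ((s + (p : ℝ)) ^ α + t ^ α) ^ (1 / α) - (s ^ α + t ^ α) ^ (1 / α)) ∧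
      StrictAntiOn
        (fun t : ℝ => ((s + (p : ℝ)) ^ α + t ^ α) ^ (1 / α) - (s ^ α + t ^ α) ^ (1 / α))
        (Set.Ioi (0 : ℝ)) := by
  have hα0 : (0:ℝ) < α := by linarith
  have hp' : (0:ℝ) < (p : ℝ) := by exact_mod_cast hp
  have hsp : 0 < s + (p : ℝ) := by linarith
  have hlt : s ^ α < (s + (p : ℝ)) ^ α :=
    Real.rpow_lt_rpow hs.le (by linarith) hα0
  constructor
  · intro t ht
    have h1 : s ^ α + t ^ α < (s + (p : ℝ)) ^ α + t ^ α := by linarith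
    have h2 : (s ^ α + t ^ α) ^ (1 / α) < ((s + (p : ℝ)) ^ α + t ^ α) ^ (1 / α) :=
      Real.rpow_lt_rpow (by positivity) h1 (by positivity)
    linarith
  · have key : ∀ t ∈ Set.Ioi (0:ℝ),
        HasDerivAt (fun t : ℝ => ((s + (p : ℝ)) ^ α + t ^ α) ^ (1 / α)
            - (s ^ α + t ^ α) ^ (1 / α))
          (t ^ (α - 1) * (((s + (p : ℝ)) ^ α + t ^ α) ^ (1 / α - 1)
            - (s ^ α + t ^ α) ^ (1 / α - 1))) t := by
      intro t ht
      have ht : 0 < t := ht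
      have hA := aux_hasDerivAt α hα (Real.rpow_pos_of_pos hsp α) ht
      have hB := aux_hasDerivAt α hα (Real.rpow_pos_of_pos hs α) ht
      have := hA.sub hB
      refine this.congr_deriv ?_
      ring
    apply strictAntiOn_of_deriv_neg (convex_Ioi 0)
    · exact fun t ht => (key t ht).continuousAt.continuousWithinAt
    · intro t ht
      rw [interior_Ioi] at ht
      rw [(key t ht).deriv]
      have ht : 0 < t := ht
      have h1 : s ^ α + t ^ α < (s + (p : ℝ)) ^ α + t ^ α := by linarith
      have h2 : ((s + (p : ℝ)) ^ α + t ^ α) ^ (1 / α - 1)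
          < (s ^ α + t ^ α) ^ (1 / α - 1) := by
        apply Real.rpow_lt_rpow_of_neg (by positivity) h1
        have : 1 / α < 1 := by
          rw [div_lt_one hα0]; linarith
        linarith
      have h3 : 0 < t ^ (α - 1) := Real.rpow_pos_of_pos ht _
      nlinarith
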